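/- Every vector h ∈ ℝ^n satisfying h_{m-1} − 2h_m + h_{m+1} ≤ 0 for m = 1,...,n (with h_0 = 0, h_{n+1} = h_n) is a nonnegative linear combination of the vectors v_k, k = 1,...,n, where (v_k)_m = min(m,k). -/
import Mathlib

open Finset Real

/-- Extend `h : Fin n → ℝ` (1-indexed as `h_1,…,h_n`) to `ℕ` with the
conventions `h_0 = 0` and `h_m = h_n` for `m > n`. -/
noncomputable def pad (n : ℕ) (h : Fin n → ℝ) : ℕ → ℝ := fun m =>
  if m = 0 then 0
  else if hm : m - 1 < n then h ⟨m - 1, hm⟩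
  else if hn : n - 1 < n then h ⟨n - 1, hn⟩ else 0

/-- The cone `Φ_n` of vectors whose padded sequence has nonpositive second differences. -/
def Phi (n : ℕ) : Set (Fin n → ℝ) :=
  {h | ∀ m, 1 ≤ m → m ≤ n → pad n h (m - 1) - 2 * pad n h m + pad n h (m + 1) ≤ 0}

/-- The second-order difference map `Θ`, with conventions `h_0 = 0`, `h_{n+1} = h_n`. -/
noncomputable def theta (n : ℕ) (h : Fin n → ℝ) : Fin n → ℝ :=
  fun i => pad n h i.val - 2 * pad n h (i.val + 1) + pad n h (i.val + 2)

lemma pad_zero (n : ℕ) (h : Fin n → ℝ) : pad n h 0 = 0 := by simp [pad]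

lemma pad_succ (n : ℕ) (h : Fin n → ℝ) (j : ℕ) (hj : j < n) :
    pad n h (j + 1) = h ⟨j, hj⟩ := by
  simp [pad, hj]

lemma pad_top (n : ℕ) (h : Fin n → ℝ) : pad n h (n + 1) = pad n h n := by
  rcases Nat.eq_zero_or_pos n with rfl | hn
  · simp [pad]
  · have h1 : ¬ (n + 1 - 1 < n) := by omega
    have h2 : n - 1 < n := by omega
    have h3 : n ≠ 0 := by omega
    simp [pad, h1, h2, h3]

/-- Every `h ∈ Φ_n` is a nonnegative combination of the vectors
`v_k = (1,2,…,k,k,…,k)`, i.e. `(v_k)_m = min(m,k)` for `k = 1,…,n`. -/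
theorem Phi_generated_by_min_vectors (n : ℕ) (h : Fin n → ℝ) (hh : h ∈ Phi n) :
    ∃ c : Fin n → ℝ, (∀ k, 0 ≤ c k) ∧
      ∀ i : Fin n, h i = ∑ k : Fin n, c k * (min (i.val + 1) (k.val + 1) : ℕ) := by
  set p := pad n h with hp
  set c' : ℕ → ℝ := fun k => 2 * p (k + 1) - p k - p (k + 2) with hc'
  refine ⟨fun k => c' k.1, ?_, ?_⟩
  · intro k
    have hk := hh (k.1 + 1) (by omega) (by omega)
    have he : k.1 + 1 - 1 = k.1 := by omega
    rw [he] at hk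
    simp only [hc']
    have : k.1 + 1 + 1 = k.1 + 2 := by omega
    rw [this] at hk
    linarith
  · intro i
    set g : ℕ → ℝ := fun k => p (k + 1) - p k with hg
    have hcg : ∀ k, c' k = g k - g (k + 1) := by
      intro k; simp only [hc', hg]; ring
    have hgn : g n = 0 := by
      simp only [hg, hp]
      rw [pad_top]
      ring
    have key : ∑ k ∈ range n, c' k * ((min (i.1 + 1) (k + 1) : ℕ) : ℝ) = p (i.1 + 1) := by
      have step1 : ∀ k ∈ range n, c' k * ((min (i.1 + 1) (k + 1) : ℕ) : ℝ)
          = ∑ j ∈ range n, (if j ≤ i.1 ∧ j ≤ k then c' k else 0) := by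
        intro k hk
        rw [mem_range] at hk
        have hm : ((min (i.1 + 1) (k + 1) : ℕ) : ℝ)
            = ∑ j ∈ range n, (if j ≤ i.1 ∧ j ≤ k then (1 : ℝ) else 0) := by
          rw [← Finset.sum_filter]
          have : Finset.filter (fun j => j ≤ i.1 ∧ j ≤ k) (range n)
              = range (min (i.1 + 1) (k + 1)) := by
            ext j
            simp only [mem_filter, mem_range]
            have := i.2
            omega
          rw [this]; simp
        rw [hm, Finset.mul_sum]
        refine Finset.sum_congr rfl fun j _ => ?_
        split <;> simp
      rw [Finset.sum_congr rfl step1, Finset.sum_comm]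
      have step2 : ∀ j ∈ range n, (∑ k ∈ range n, if j ≤ i.1 ∧ j ≤ k then c' k else 0)
          = (if j ≤ i.1 then g j else 0) := by
        intro j hj
        rw [mem_range] at hj
        by_cases hji : j ≤ i.1
        · simp only [hji, true_and, if_true]
          rw [← Finset.sum_filter]
          have hfil : Finset.filter (fun k => j ≤ k) (range n) = Finset.Ico j n := by
            ext k; simp only [mem_filter, mem_range, mem_Ico]; omega
          rw [hfil]
          have := Finset.sum_Ico_eq_sub (fun k => c' k) (le_of_lt hj)
          rw [this]
          have e1 : ∑ k ∈ range n, c' k = g 0 - g n := by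
            simp only [hcg]; exact Finset.sum_range_sub' g n
          have e2 : ∑ k ∈ range j, c' k = g 0 - g j := by
            simp only [hcg]; exact Finset.sum_range_sub' g j
          rw [e1, e2, hgn]; ring
        · simp only [hji, false_and, if_false]
          simp
      rw [Finset.sum_congr rfl step2]
      rw [← Finset.sum_filter]
      have hfil2 : Finset.filter (fun j => j ≤ i.1) (range n) = range (i.1 + 1) := by
        ext j; simp only [mem_filter, mem_range]; have := i.2; omega
      rw [hfil2]
      have : ∑ j ∈ range (i.1 + 1), g j = p (i.1 + 1) - p 0 := by
        simp only [hg]; exact Finset.sum_range_sub p (i.1 + 1)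
      rw [this, hp, pad_zero]
      ring
    rw [Fin.sum_univ_eq_sum_range (fun k => c' k * ((min (i.1 + 1) (k + 1) : ℕ) : ℝ)), key]
    exact (pad_succ n h i.1 i.2).symm
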